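/- Let R be a commutative Noetherian ring and let (M_i)_{i ∈ ι} be a family of R-modules such that each M_i is flat and cotorsion. Then the product ∏_{i ∈ ι} M_i is a flat and cotorsion R-module. -/

import Mathlib

/-!
STATEMENT 3: Let `R` be a commutative Noetherian ring and `(M i)_{i ∈ ι}` a family of
`R`-modules, each flat and cotorsion.  Then `∏ i, M i` is a flat and cotorsion `R`-module.

The vanishing of the (Yoneda) group `Ext¹(A, B)` is expressed by the (equivalent)
statement that every short exact sequence `0 → B → E → A → 0` splits.
-/

universe u

open CategoryTheory Limits

/-- Vanishing of (Yoneda) `Ext¹(A, B)` in an abelian category: every short exact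
sequence `0 → B → E → A → 0` splits. -/
def Ext1Vanishes {C : Type*} [Category C] [Abelian C] (A B : C) : Prop :=
  ∀ (E : C) (f : B ⟶ E) (g : E ⟶ A) (w : f ≫ g = 0),
    (ShortComplex.mk f g w).ShortExact → ∃ s : A ⟶ E, s ≫ g = 𝟙 A

/-- An `R`-module `M` is cotorsion if `Ext¹_R(F, M) = 0` for every flat `R`-module `F`. -/
def IsCotorsion (R : Type u) [CommRing R] (M : Type u) [AddCommGroup M] [Module R M] : Prop :=
  ∀ F : ModuleCat.{u} R, Module.Flat R F → Ext1Vanishes F (ModuleCat.of R M)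


open LinearMap Finsupp

private lemma aux_flat {R : Type u} [CommRing R] {M : Type u} [AddCommGroup M] [Module R M]
    [Module.Flat R M] {ι : Type*} [Fintype ι] {f : ι → R} {x : ι → M}
    (hx : ∑ i, f i • x i = 0) (s : Finset (ι → R))
    (hs : ∀ a : ι → R, (∑ i, f i * a i = 0) → a ∈ Submodule.span R (s : Set (ι → R))) :
    ∃ z : (ι → R) → M, ∀ i, x i = ∑ a ∈ s, a i • z a := by
  obtain ⟨κ, a, y, h1, h2⟩ := Module.Flat.isTrivialRelation_of_sum_smul_eq_zero hx
  choose c _ hc using fun k => Submodule.mem_span_finset.mp (hs (fun i => a i k) (h2 k))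
  refine ⟨fun g => ∑ k, c k g • y k, fun i => ?_⟩
  rw [h1 i]
  have key : ∀ k, a i k = ∑ g ∈ s, c k g * g i := by
    intro k
    have := congrFun (hc k) i
    simpa using this.symm
  calc ∑ k, a i k • y k = ∑ k, ∑ g ∈ s, (g i * c k g) • y k := by
        refine Finset.sum_congr rfl fun k _ => ?_
        rw [key k, Finset.sum_smul]
        exact Finset.sum_congr rfl fun g _ => by rw [mul_comm]
    _ = ∑ g ∈ s, ∑ k, (g i * c k g) • y k := Finset.sum_comm
    _ = ∑ g ∈ s, g i • ∑ k, c k g • y k := by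
        refine Finset.sum_congr rfl fun g _ => ?_
        rw [Finset.smul_sum]
        exact Finset.sum_congr rfl fun k _ => by rw [mul_smul]

private lemma flat_pi (R : Type u) [CommRing R] [IsNoetherianRing R]
    (ι : Type u) (M : ι → Type u) [∀ i, AddCommGroup (M i)] [∀ i, Module R (M i)]
    (hflat : ∀ i, Module.Flat R (M i)) : Module.Flat R (∀ i, M i) := by
  refine Module.Flat.of_forall_isTrivialRelation ?_
  intro κ f x hx
  classical
  let φ : (Fin κ → R) →ₗ[R] R :=
    LinearMap.lsum R (fun _ : Fin κ => R) R (fun i => LinearMap.toSpanSingleton R R (f i))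
  have hφ : ∀ a : Fin κ → R, φ a = ∑ i, f i * a i := by
    intro a
    simp [φ, LinearMap.lsum_apply, LinearMap.toSpanSingleton_apply, mul_comm, smul_eq_mul]
  obtain ⟨s, hs⟩ := (IsNoetherian.noetherian (LinearMap.ker φ))
  have hmem : ∀ a : Fin κ → R, (∑ i, f i * a i = 0) → a ∈ Submodule.span R (s : Set (Fin κ → R)) := by
    intro a ha
    rw [hs]
    exact LinearMap.mem_ker.mpr (by rw [hφ]; exact ha)
  have key : ∀ j, ∃ z : (Fin κ → R) → M j, ∀ i, x i j = ∑ a ∈ s, a i • z a := by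
    intro j
    haveI := hflat j
    have hxj : ∑ i, f i • (x i j) = 0 := by
      have := congrFun hx j
      simpa using this
    exact aux_flat hxj s hmem
  choose z hz using key
  refine ⟨s.card, fun i g => ((s.equivFin.symm g : s) : Fin κ → R) i,
    fun g => fun j => z j (s.equivFin.symm g), ?_, ?_⟩
  · intro i
    funext j
    have : (∑ g : Fin s.card, ((s.equivFin.symm g : s) : Fin κ → R) i •
        fun j => z j (s.equivFin.symm g)) j = ∑ g : s, (g : Fin κ → R) i • z j g := by
      simp only [Finset.sum_apply, Pi.smul_apply]
      exact Equiv.sum_comp s.equivFin.symm (fun g : s => (g : Fin κ → R) i • z j g)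
    rw [this, Finset.sum_coe_sort s (fun g => g i • z j g)]
    exact hz j i
  · intro g'
    set g := s.equivFin.symm g'
    have hg : (g : Fin κ → R) ∈ LinearMap.ker φ := by
      rw [← hs]; exact Submodule.subset_span g.2
    have := LinearMap.mem_ker.mp hg
    rw [hφ] at this
    exact this

lemma cotorsion_pi (R : Type u) [CommRing R]
    (ι : Type u) (M : ι → Type u) [∀ i, AddCommGroup (M i)] [∀ i, Module R (M i)]
    (hcot : ∀ i, IsCotorsion R (M i)) : IsCotorsion R (∀ i, M i) := by
  intro F hF E f g w hse
  let fL : (∀ i, M i) →ₗ[R] E := f.hom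
  let gL : E →ₗ[R] F := g.hom
  have hfinj : Function.Injective fL := hse.moduleCat_injective_f
  have hrange : LinearMap.range fL = LinearMap.ker gL := hse.exact.moduleCat_range_eq_ker
  have wapp : ∀ m, gL (fL m) = 0 := fun m => by
    have := congrArg (fun φ => φ.hom m) w
    simpa using this
  -- pushout of f along the i-th projection
  let T : ∀ i, Submodule R (M i × E) := fun i =>
    LinearMap.range (LinearMap.prod (LinearMap.proj i) (-fL))
  let Ei : ∀ i, Type u := fun i => (M i × E) ⧸ T i
  let fi : ∀ i, M i →ₗ[R] Ei i := fun i => (T i).mkQ ∘ₗ LinearMap.inl R (M i) E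
  let inEi : ∀ i, E →ₗ[R] Ei i := fun i => (T i).mkQ ∘ₗ LinearMap.inr R (M i) E
  let gi : ∀ i, Ei i →ₗ[R] F := fun i =>
    (T i).liftQ (gL ∘ₗ LinearMap.snd R (M i) E) (by
      rintro _ ⟨m, rfl⟩
      rw [LinearMap.mem_ker]
      simp only [LinearMap.comp_apply, LinearMap.prod_apply, Function.prod, LinearMap.snd_apply,
        LinearMap.neg_apply, map_neg, neg_eq_zero]
      exact wapp m)
  let fih : ∀ i, ModuleCat.of R (M i) ⟶ ModuleCat.of R (Ei i) := fun i => ModuleCat.ofHom (fi i)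
  let gih : ∀ i, ModuleCat.of R (Ei i) ⟶ F := fun i => ModuleCat.ofHom (Y := F) (gi i)
  have wi : ∀ i, fih i ≫ gih i = 0 := by
    intro i
    ext a
    show gi i (fi i a) = 0
    show ((T i).liftQ (gL ∘ₗ LinearMap.snd R (M i) E) _) (Submodule.Quotient.mk (a, 0)) = 0
    rw [Submodule.liftQ_apply]
    simp
  have hse_i : ∀ i, (ShortComplex.mk (fih i) (gih i) (wi i)).ShortExact := by
    intro i
    refine ShortComplex.ShortExact.mk' ?_ ?_ ?_
    · -- exact
      rw [ShortComplex.moduleCat_exact_iff]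
      intro x2 hx2
      obtain ⟨⟨a, e⟩, rfl⟩ := (T i).mkQ_surjective x2
      have he : gL e = 0 := by
        have : ((T i).liftQ (gL ∘ₗ LinearMap.snd R (M i) E) _)
            (Submodule.Quotient.mk (a, e)) = 0 := hx2
        rw [Submodule.liftQ_apply] at this
        simpa using this
      obtain ⟨m, hm⟩ : e ∈ LinearMap.range fL := by rw [hrange]; exact he
      refine ⟨a + m i, ?_⟩
      show (T i).mkQ (a + m i, 0) = (T i).mkQ (a, e)
      rw [← sub_eq_zero, ← map_sub, Submodule.mkQ_apply, Submodule.Quotient.mk_eq_zero]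
      exact ⟨m, by simp [Prod.ext_iff, hm, Function.prod]⟩
    · -- mono
      rw [ModuleCat.mono_iff_injective, ← LinearMap.ker_eq_bot, LinearMap.ker_eq_bot']
      intro a ha
      have h0 : (T i).mkQ (a, 0) = 0 := ha
      rw [Submodule.mkQ_apply, Submodule.Quotient.mk_eq_zero] at h0
      obtain ⟨m, hm⟩ := h0
      have hm1 : m i = a := congrArg Prod.fst hm
      have hm2 : -(fL m) = (0 : E) := congrArg Prod.snd hm
      have hm0 : m = 0 := by
        apply hfinj
        rw [map_zero]
        simpa [neg_eq_zero] using hm2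
      rw [← hm1, hm0]
      rfl
    · -- epi
      rw [ModuleCat.epi_iff_surjective]
      intro y
      obtain ⟨e, rfl⟩ := hse.moduleCat_surjective_g y
      refine ⟨(T i).mkQ (0, e), ?_⟩
      show ((T i).liftQ (gL ∘ₗ LinearMap.snd R (M i) E) _) (Submodule.Quotient.mk (0, e)) = _
      rw [Submodule.liftQ_apply]
      rfl
  -- each pushout splits, get retraction of fi
  have hsplit : ∀ i, ∃ r : Ei i →ₗ[R] M i, ∀ a, r (fi i a) = a := by
    intro i
    obtain ⟨s, hsg⟩ := hcot i F hF (ModuleCat.of R (Ei i)) (fih i) (gih i) (wi i) (hse_i i)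
    let spl := ShortComplex.Splitting.ofExactOfSection _ (hse_i i).exact s hsg (hse_i i).mono_f
    refine ⟨spl.r.hom, fun a => ?_⟩
    have := congrArg (fun φ => φ.hom a) spl.f_r
    exact this
  choose r hr using hsplit
  -- assemble retraction of f
  let rr : E →ₗ[R] (∀ i, M i) := LinearMap.pi (fun i => r i ∘ₗ inEi i)
  have hfr : ∀ m, rr (fL m) = m := by
    intro m
    funext i
    show r i ((T i).mkQ (0, fL m)) = m i
    have : (T i).mkQ (0, fL m) = (T i).mkQ (m i, 0) := by
      rw [← sub_eq_zero, ← map_sub, Submodule.mkQ_apply, Submodule.Quotient.mk_eq_zero]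
      exact ⟨-m, by simp [Prod.ext_iff, Function.prod]⟩
    rw [this]
    exact hr i (m i)
  let rrh : E ⟶ ModuleCat.of R (∀ i, M i) := ModuleCat.ofHom (X := E) rr
  have hfr' : f ≫ rrh = 𝟙 _ := by
    ext m
    exact congrFun (hfr m) _
  let spl := ShortComplex.Splitting.ofExactOfRetraction _ hse.exact rrh hfr' hse.epi_g
  exact ⟨spl.s, spl.s_g⟩

theorem flat_and_cotorsion_pi (R : Type u) [CommRing R] [IsNoetherianRing R]
    (ι : Type u) (M : ι → Type u) [∀ i, AddCommGroup (M i)] [∀ i, Module R (M i)]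
    (hflat : ∀ i, Module.Flat R (M i)) (hcot : ∀ i, IsCotorsion R (M i)) :
    Module.Flat R (∀ i, M i) ∧ IsCotorsion R (∀ i, M i) :=
  ⟨flat_pi R ι M hflat, cotorsion_pi R ι M hcot⟩
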